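/- arXiv:2108.12277 — 4 statements merged into one kernel-verified Lean document; each statement's English description precedes it below -/
import Mathlib

section
/- Let M ≥ 1 be a natural number, ρ > 0 and μ > 0 real numbers, λ = μρ, ω a real number. Let π_M = (ρ^M/M!) / (Σ_{k=0}^{M} ρ^k/k!) be the Erlang blocking probability and set g = λ·ω·π_M. Define v : ℤ → ℝ by v(q) = (g/(μρ)) · Σ_{i=1}^{q} Σ_{m=0}^{q−i} ((q−i)!/(q−i−m)!) · ρ^{−m} for q ≥ 1 and v(q) = 0 for q ≤ 0. Then v is an exact solution of Howard's equation for the symmetric single-rate loss system with capacity M: (a) for every integer q with 0 ≤ q < M, λ·(v(q+1) − v(q)) − μ·q·(v(q) − v(q−1)) = g; and (b) at the full state q = M, −μ·M·(v(M) − v(M−1)) = g − λ·ω. -/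
open Finset

noncomputable def Af (ρ : ℝ) (n : ℕ) : ℝ :=
  ∑ m ∈ Finset.range (n + 1),
    ((Nat.factorial n : ℝ) / (Nat.factorial (n - m) : ℝ)) * ρ ^ (-(m : ℤ))

lemma Af_zero (ρ : ℝ) : Af ρ 0 = 1 := by simp [Af]

lemma Af_succ (ρ : ℝ) (hρ : ρ ≠ 0) (n : ℕ) :
    ρ * Af ρ (n + 1) = ρ + ((n : ℝ) + 1) * Af ρ n := by
  have key : Af ρ (n + 1) = 1 + ((n : ℝ) + 1) / ρ * Af ρ n := by
    rw [Af, Finset.sum_range_succ']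
    have h0 : ((Nat.factorial (n+1) : ℝ) / (Nat.factorial (n+1-0) : ℝ)) * ρ ^ (-((0:ℕ) : ℤ)) = 1 := by
      simp [div_self, Nat.factorial_ne_zero]
    rw [h0, Af, Finset.mul_sum, add_comm]
    congr 1
    refine Finset.sum_congr rfl fun m hm => ?_
    have h1 : n + 1 - (m + 1) = n - m := by omega
    have h2 : (-((m+1:ℕ) : ℤ)) = (-(m:ℤ)) + (-1) := by push_cast; ring
    rw [h1, h2, zpow_add₀ hρ, Nat.factorial_succ]
    push_cast
    field_simp
  rw [key]
  field_simp

lemma Af_closed (ρ : ℝ) (hρ : ρ ≠ 0) (n : ℕ) :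
    Af ρ n = (Nat.factorial n : ℝ) * ρ ^ (-(n : ℤ)) *
      ∑ j ∈ Finset.range (n + 1), ρ ^ j / (Nat.factorial j : ℝ) := by
  rw [Af, ← Finset.sum_range_reflect, Finset.mul_sum]
  refine Finset.sum_congr rfl fun j hj => ?_
  have hjn : j ≤ n := by simpa [Nat.lt_succ_iff] using hj
  have h1 : n + 1 - 1 - j = n - j := by omega
  have h2 : n - (n - j) = j := by omega
  have h3 : (-((n - j : ℕ) : ℤ)) = (j : ℤ) + (-(n : ℤ)) := by
    have : ((n - j : ℕ) : ℤ) = (n : ℤ) - (j : ℤ) := by push_cast [hjn]; ring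
    rw [this]; ring
  rw [h1, h2, h3, zpow_add₀ hρ, zpow_natCast]
  field_simp

/-- The explicit formula (9) exactly solves Howard's equation for the symmetric
single-rate loss system with capacity `M`, offered load `ρ`, service rate `μ`,
total arrival rate `λ = μ·ρ`, blocking cost `ω`, Erlang blocking probability `π_M`
and average cost rate `g = λ·ω·π_M`. -/
theorem howard_equation_exact_solution_symmetric
    (M : ℕ) (hM : 1 ≤ M)
    (ρ μ lam ω πM g : ℝ)
    (hρ : 0 < ρ) (hμ : 0 < μ)
    (hlam : lam = μ * ρ)
    (hπ : πM = (ρ ^ M / (Nat.factorial M : ℝ)) /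
      (∑ k ∈ Finset.range (M + 1), ρ ^ k / (Nat.factorial k : ℝ)))
    (hg : g = lam * ω * πM)
    (v : ℤ → ℝ)
    (hv0 : ∀ q : ℤ, q ≤ 0 → v q = 0)
    (hv : ∀ q : ℕ, 1 ≤ q →
      v q = g / (μ * ρ) *
        ∑ i ∈ Finset.Icc 1 q, ∑ m ∈ Finset.range (q - i + 1),
          ((Nat.factorial (q - i) : ℝ) / (Nat.factorial (q - i - m) : ℝ)) *
            ρ ^ (-(m : ℤ))) :
    (∀ q : ℤ, 0 ≤ q → q < (M : ℤ) →
      lam * (v (q + 1) - v q) - μ * (q : ℝ) * (v q - v (q - 1)) = g) ∧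
    (-(μ * (M : ℝ)) * (v (M : ℤ) - v ((M : ℤ) - 1)) = g - lam * ω) := by
  have hρ' : ρ ≠ 0 := ne_of_gt hρ
  have hμ' : μ ≠ 0 := ne_of_gt hμ
  -- v at natural points
  have hvnat : ∀ q : ℕ, v q = g / (μ * ρ) * ∑ n ∈ Finset.range q, Af ρ n := by
    intro q
    rcases Nat.eq_zero_or_pos q with h | h
    · subst h; simp [hv0 0 le_rfl]
    · rw [hv q h]
      congr 1
      have h1 : ∀ i ∈ Finset.Icc 1 q,
          (∑ m ∈ Finset.range (q - i + 1),
            ((Nat.factorial (q - i) : ℝ) / (Nat.factorial (q - i - m) : ℝ)) *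
              ρ ^ (-(m : ℤ))) = Af ρ (q - i) := fun i _ => rfl
      rw [Finset.sum_congr rfl h1, ← Finset.Ico_add_one_right_eq_Icc, Finset.sum_Ico_eq_sum_range]
      have h2 : ∀ j ∈ Finset.range (q + 1 - 1), Af ρ (q - (1 + j)) = Af ρ (q - 1 - j) := by
        intro j _; congr 1; omega
      rw [Finset.sum_congr rfl h2]
      have h3 : q + 1 - 1 = q := by omega
      rw [h3, Finset.sum_range_reflect]
  have hdiff : ∀ n : ℕ, v ((n : ℤ) + 1) - v n = g / (μ * ρ) * Af ρ n := by
    intro n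
    have e1 : ((n : ℤ) + 1) = ((n + 1 : ℕ) : ℤ) := by push_cast; ring
    rw [e1, hvnat (n + 1), hvnat n, Finset.sum_range_succ]
    ring
  have hgc : μ * ρ * (g / (μ * ρ)) = g := by field_simp
  constructor
  · intro q hq0 hqM
    lift q to ℕ using hq0 with n
    rcases Nat.eq_zero_or_pos n with h | h
    · subst h
      have d := hdiff 0
      rw [Af_zero] at d
      simp only [Nat.cast_zero] at d ⊢
      rw [d, hlam]
      linear_combination hgc
    · obtain ⟨k, rfl⟩ : ∃ k, n = k + 1 := ⟨n - 1, by omega⟩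
      have e1 : ((k + 1 : ℕ) : ℤ) - 1 = ((k : ℕ) : ℤ) := by push_cast; ring
      have e2 : v ((k + 1 : ℕ) : ℤ) - v (((k + 1 : ℕ) : ℤ) - 1) = g / (μ * ρ) * Af ρ k := by
        rw [e1]
        have h' : ((k + 1 : ℕ) : ℤ) = ((k : ℕ) : ℤ) + 1 := by push_cast; ring
        rw [h']
        exact hdiff k
      have e3 : v (((k + 1 : ℕ) : ℤ) + 1) - v ((k + 1 : ℕ) : ℤ) = g / (μ * ρ) * Af ρ (k + 1) := by
        exact_mod_cast hdiff (k + 1)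
      rw [e3, e2, hlam]
      push_cast
      linear_combination (μ * (g / (μ * ρ))) * Af_succ ρ hρ' k + hgc
  · obtain ⟨k, rfl⟩ : ∃ k, M = k + 1 := ⟨M - 1, by omega⟩
    have e1 : ((k + 1 : ℕ) : ℤ) - 1 = ((k : ℕ) : ℤ) := by push_cast; ring
    have e2 : v ((k + 1 : ℕ) : ℤ) - v (((k + 1 : ℕ) : ℤ) - 1) = g / (μ * ρ) * Af ρ k := by
      rw [e1]
      have h' : ((k + 1 : ℕ) : ℤ) = ((k : ℕ) : ℤ) + 1 := by push_cast; ring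
      rw [h']; exact hdiff k
    rw [e2, Af_closed ρ hρ' k, hg, hπ, hlam]
    set E : ℝ := ∑ j ∈ Finset.range (k + 1), ρ ^ j / (Nat.factorial j : ℝ) with hE
    have hEpos : 0 < E := by
      apply Finset.sum_pos
      · intro j _
        positivity
      · exact ⟨0, Finset.mem_range.2 (by omega)⟩
    rw [Finset.sum_range_succ]
    have hz : ρ ^ (-(k : ℤ)) = (ρ ^ k)⁻¹ := by
      rw [zpow_neg, zpow_natCast]
    rw [hz, Nat.factorial_succ]
    have hfk : (Nat.factorial k : ℝ) ≠ 0 := by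
      exact_mod_cast Nat.factorial_ne_zero k
    push_cast
    have hDne : E + ρ ^ (k + 1) / (((k : ℝ) + 1) * (Nat.factorial k : ℝ)) ≠ 0 := by
      have h1 : (0:ℝ) < ρ ^ (k + 1) / (((k : ℝ) + 1) * (Nat.factorial k : ℝ)) := by
        have : (0:ℝ) < (Nat.factorial k : ℝ) := by
          exact_mod_cast Nat.factorial_pos k
        positivity
      linarith
    field_simp
    ring
end

section
/- Fix m ≥ 1, real arrival rates λ_1, …, λ_m > 0, a real number p, and positive integers ω_1, …, ω_m. For n ∈ ℕ and a tuple r⃗ = (r_1, …, r_m) ∈ ℕ^m with Σ r_i ≤ n write C(n; r⃗) = n!/(r_1!⋯r_m!·(n−Σr_i)!), and set C(n; r⃗) = 0 when Σ r_i > n or some entry is negative. For n ∈ ℕ and an integer r define S(n, r) = Σ over tuples r⃗ ∈ ℕ^m with Σ_{i} ω_i·r_i = r of C(n; r⃗)·(1 − p·Σ_i λ_i)^{n−Σ r_i}·Π_{i=1}^{m} (p·λ_i)^{r_i} (a finite sum, since each ω_i ≥ 1), and set S(n, r) = 0 for r < 0. Then for all n ∈ ℕ and all integers r ≥ 0: S(n+1,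 r) = (1 − p·Σ_{i=1}^{m} λ_i)·S(n, r) + p·Σ_{i=1}^{m} λ_i·S(n, r − ω_i). -/
lemma sum_update_sub_one (m : ℕ) (rv : Fin m → ℕ) (i : Fin m) (h : 1 ≤ rv i) :
    ∑ j, Function.update rv i (rv i - 1) j = (∑ j, rv j) - 1 := by
  have h1 : ∑ j, Function.update rv i (rv i - 1) j
      = (rv i - 1) + ∑ j ∈ Finset.univ.erase i, rv j := by
    rw [← Finset.add_sum_erase _ _ (Finset.mem_univ i), Function.update_self]
    congr 1
    exact Finset.sum_congr rfl fun j hj => Function.update_of_ne (Finset.ne_of_mem_erase hj) _ _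
  have h2 : ∑ j, rv j = rv i + ∑ j ∈ Finset.univ.erase i, rv j :=
    (Finset.add_sum_erase _ _ (Finset.mem_univ i)).symm
  omega

lemma prod_pow_update_sub_one (m : ℕ) (x : Fin m → ℝ) (rv : Fin m → ℕ) (i : Fin m)
    (h : 1 ≤ rv i) :
    x i * ∏ j, x j ^ (Function.update rv i (rv i - 1) j) = ∏ j, x j ^ rv j := by
  rw [← Finset.mul_prod_erase _ (fun j => x j ^ rv j) (Finset.mem_univ i),
    ← Finset.mul_prod_erase _ (fun j => x j ^ (Function.update rv i (rv i - 1) j))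
      (Finset.mem_univ i)]
  have h1 : ∏ j ∈ Finset.univ.erase i, x j ^ (Function.update rv i (rv i - 1) j)
      = ∏ j ∈ Finset.univ.erase i, x j ^ rv j :=
    Finset.prod_congr rfl fun j hj => by
      rw [Function.update_of_ne (Finset.ne_of_mem_erase hj)]
  rw [h1, Function.update_self, ← mul_assoc]
  congr 1
  rw [← pow_succ']
  congr 1
  omega

lemma prod_fact_update_sub_one (m : ℕ) (rv : Fin m → ℕ) (i : Fin m) (h : 1 ≤ rv i) :
    (rv i : ℝ) * ∏ j, ((Function.update rv i (rv i - 1) j).factorial : ℝ)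
      = ∏ j, ((rv j).factorial : ℝ) := by
  rw [← Finset.mul_prod_erase _ (fun j => ((rv j).factorial : ℝ)) (Finset.mem_univ i),
    ← Finset.mul_prod_erase _ (fun j => ((Function.update rv i (rv i - 1) j).factorial : ℝ))
      (Finset.mem_univ i)]
  have h1 : ∏ j ∈ Finset.univ.erase i, ((Function.update rv i (rv i - 1) j).factorial : ℝ)
      = ∏ j ∈ Finset.univ.erase i, ((rv j).factorial : ℝ) :=
    Finset.prod_congr rfl fun j hj => by
      rw [Function.update_of_ne (Finset.ne_of_mem_erase hj)]
  rw [h1, Function.update_self, ← mul_assoc]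
  congr 1
  obtain ⟨k, hk⟩ : ∃ k, rv i = k + 1 := ⟨rv i - 1, by omega⟩
  simp only [hk, Nat.add_sub_cancel, Nat.factorial_succ]
  push_cast
  ring

lemma cancel_aux {c a d : ℝ} (hc : c ≠ 0) : c * (a / (c * d)) = a / d := by
  rw [← mul_div_assoc, mul_div_mul_left _ _ hc]

lemma Crec (m : ℕ) (C : ℕ → (Fin m → ℕ) → ℝ)
    (hC : ∀ (n : ℕ) (rv : Fin m → ℕ), (∑ i, rv i) ≤ n →
      C n rv = (Nat.factorial n : ℝ) /
        ((∏ i, (Nat.factorial (rv i) : ℝ)) * (Nat.factorial (n - ∑ i, rv i) : ℝ)))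
    (hC0 : ∀ (n : ℕ) (rv : Fin m → ℕ), n < (∑ i, rv i) → C n rv = 0)
    (n : ℕ) (rv : Fin m → ℕ) :
    C (n + 1) rv = C n rv
      + ∑ i, (if 1 ≤ rv i then C n (Function.update rv i (rv i - 1)) else 0) := by
  have hrvle : ∀ i, rv i ≤ ∑ j, rv j := fun i =>
    Finset.single_le_sum (f := fun j => rv j) (fun j _ => Nat.zero_le _) (Finset.mem_univ i)
  rcases lt_or_ge (n + 1) (∑ j, rv j) with hgt | hle
  · rw [hC0 _ _ hgt, hC0 n rv (by omega), Finset.sum_eq_zero, add_zero]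
    intro i _
    split_ifs with h
    · apply hC0
      rw [sum_update_sub_one m rv i h]
      omega
    · rfl
  · -- ∑ rv ≤ n + 1
    have hPne : (∏ j, ((rv j).factorial : ℝ)) ≠ 0 :=
      Finset.prod_ne_zero_iff.mpr fun j _ => by
        exact_mod_cast (Nat.factorial_pos (rv j)).ne'
    have hQne : ((Nat.factorial (n + 1 - ∑ j, rv j) : ℝ)) ≠ 0 := by
      exact_mod_cast (Nat.factorial_pos _).ne'
    set K : ℝ := (Nat.factorial n : ℝ) /
      ((∏ j, ((rv j).factorial : ℝ)) * (Nat.factorial (n + 1 - ∑ j, rv j) : ℝ)) with hK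
    have hA : C (n + 1) rv = ((n : ℝ) + 1) * K := by
      rw [hC (n + 1) rv hle, hK, Nat.factorial_succ]
      push_cast
      ring
    have hB : C n rv = ((n + 1 - ∑ j, rv j : ℕ) : ℝ) * K := by
      rcases lt_or_ge n (∑ j, rv j) with h1 | h1
      · have h2 : ∑ j, rv j = n + 1 := by omega
        rw [hC0 n rv h1, h2]
        simp
      · rw [hC n rv h1, hK]
        have h2 : n + 1 - ∑ j, rv j = (n - ∑ j, rv j) + 1 := by omega
        have hc0 : (((n + 1 - ∑ j, rv j) : ℕ) : ℝ) ≠ 0 := Nat.cast_ne_zero.mpr (by omega)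
        have key : ((Nat.factorial (n + 1 - ∑ j, rv j)) : ℝ)
            = ((n + 1 - ∑ j, rv j : ℕ) : ℝ) * ((Nat.factorial (n - ∑ j, rv j)) : ℝ) := by
          rw [h2, Nat.factorial_succ]
          push_cast
          ring
        rw [key, show (∏ j, ((rv j).factorial : ℝ))
              * (((n + 1 - ∑ j, rv j : ℕ) : ℝ) * ((Nat.factorial (n - ∑ j, rv j)) : ℝ))
            = ((n + 1 - ∑ j, rv j : ℕ) : ℝ)
              * ((∏ j, ((rv j).factorial : ℝ)) * ((Nat.factorial (n - ∑ j, rv j)) : ℝ))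
          from by ring, cancel_aux hc0]
    have hD : ∀ i, (if 1 ≤ rv i then C n (Function.update rv i (rv i - 1)) else 0)
        = (rv i : ℝ) * K := by
      intro i
      split_ifs with h
      · have hs := sum_update_sub_one m rv i h
        have h1 : ∑ j, Function.update rv i (rv i - 1) j ≤ n := by
          rw [hs]; have := hrvle i; omega
        rw [hC n _ h1, hs, hK]
        have h2 : n - ((∑ j, rv j) - 1) = n + 1 - ∑ j, rv j := by
          have := hrvle i; omega
        rw [h2]
        have h3 := prod_fact_update_sub_one m rv i h
        have h4 : (∏ j, ((Function.update rv i (rv i - 1) j).factorial : ℝ)) ≠ 0 :=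
          Finset.prod_ne_zero_iff.mpr fun j _ => by
            exact_mod_cast (Nat.factorial_pos _).ne'
        have h5 : (rv i : ℝ) ≠ 0 := Nat.cast_ne_zero.mpr (by omega)
        rw [← h3, show ((rv i : ℝ) * ∏ j, ((Function.update rv i (rv i - 1) j).factorial : ℝ))
              * ((Nat.factorial (n + 1 - ∑ j, rv j)) : ℝ)
            = (rv i : ℝ) * ((∏ j, ((Function.update rv i (rv i - 1) j).factorial : ℝ))
              * ((Nat.factorial (n + 1 - ∑ j, rv j)) : ℝ)) from by ring, cancel_aux h5]
      · have h0 : rv i = 0 := by omega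
        rw [h0]
        simp
    rw [hA, hB]
    have hsum : ∑ i, (if 1 ≤ rv i then C n (Function.update rv i (rv i - 1)) else 0)
        = ((∑ j, rv j : ℕ) : ℝ) * K := by
      rw [Finset.sum_congr rfl fun i _ => hD i, ← Finset.sum_mul]
      push_cast
      ring
    rw [hsum]
    have hc : ((n + 1 - ∑ j, rv j : ℕ) : ℝ) + ((∑ j, rv j : ℕ) : ℝ) = (n : ℝ) + 1 := by
      have : (n + 1 - ∑ j, rv j) + (∑ j, rv j) = n + 1 := by omega
      exact_mod_cast congrArg (Nat.cast : ℕ → ℝ) this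
    rw [← add_mul, hc]

/-- One step term of the cost distribution. -/
def Fterm (m : ℕ) (C : ℕ → (Fin m → ℕ) → ℝ) (lam : Fin m → ℝ) (p : ℝ)
    (k : ℕ) (rv : Fin m → ℕ) : ℝ :=
  C k rv * (1 - p * ∑ i, lam i) ^ (k - ∑ i, rv i) * ∏ i, (p * lam i) ^ (rv i)

/-- The cost-distribution part of Theorem 2: the discrete cost distribution `S`,
built from multinomial coefficients with remainder, satisfies the one-step cost
recursion of the simpler pricing scheme. -/
theorem cost_distribution_recursion
    (m : ℕ) (hm : 1 ≤ m)
    (lam : Fin m → ℝ) (hlam : ∀ i, 0 < lam i)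
    (p : ℝ)
    (ω : Fin m → ℕ) (hω : ∀ i, 1 ≤ ω i)
    (C : ℕ → (Fin m → ℕ) → ℝ)
    (hC : ∀ (n : ℕ) (rv : Fin m → ℕ), (∑ i, rv i) ≤ n →
      C n rv = (Nat.factorial n : ℝ) /
        ((∏ i, (Nat.factorial (rv i) : ℝ)) * (Nat.factorial (n - ∑ i, rv i) : ℝ)))
    (hC0 : ∀ (n : ℕ) (rv : Fin m → ℕ), n < (∑ i, rv i) → C n rv = 0)
    (S : ℕ → ℤ → ℝ)
    (hSneg : ∀ (n : ℕ) (r : ℤ), r < 0 → S n r = 0)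
    (hS : ∀ (n : ℕ) (r : ℤ), 0 ≤ r →
      S n r = ∑' rv : Fin m → ℕ,
        if (∑ i, (ω i : ℤ) * (rv i : ℤ)) = r then
          C n rv * (1 - p * ∑ i, lam i) ^ (n - ∑ i, rv i) *
            ∏ i, (p * lam i) ^ (rv i)
        else 0) :
    ∀ (n : ℕ) (r : ℤ), 0 ≤ r →
      S (n + 1) r = (1 - p * ∑ i, lam i) * S n r
        + p * ∑ i, lam i * S n (r - (ω i : ℤ)) := by
  intro n r hr
  set A : ℝ := 1 - p * ∑ i, lam i with hA
  set W : (Fin m → ℕ) → ℤ := fun rv => ∑ i, (ω i : ℤ) * (rv i : ℤ) with hWdef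
  set sbox : Finset (Fin m → ℕ) :=
    Fintype.piFinset (fun _ : Fin m => Finset.range (r.toNat + 1)) with hsbox
  have hrt : (r.toNat : ℤ) = r := Int.toNat_of_nonneg hr
  -- lower bounds on W
  have hWterm : ∀ (rv : Fin m → ℕ) (i : Fin m), (ω i : ℤ) * (rv i : ℤ) ≤ W rv := by
    intro rv i
    exact Finset.single_le_sum (f := fun j => (ω j : ℤ) * (rv j : ℤ))
      (fun j _ => by positivity) (Finset.mem_univ i)
  have hWlb : ∀ (rv : Fin m → ℕ) (i : Fin m), (rv i : ℤ) ≤ W rv := by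
    intro rv i
    refine le_trans ?_ (hWterm rv i)
    have h1 : (1 : ℤ) ≤ (ω i : ℤ) := by exact_mod_cast hω i
    nlinarith [Int.ofNat_nonneg (rv i)]
  -- W of an update
  have hWupd : ∀ (rv : Fin m → ℕ) (i : Fin m) (v : ℕ),
      W (Function.update rv i v) = W rv - (ω i : ℤ) * (rv i : ℤ) + (ω i : ℤ) * (v : ℤ) := by
    intro rv i v
    have h1 : W (Function.update rv i v)
        = (ω i : ℤ) * (v : ℤ)
          + ∑ j ∈ Finset.univ.erase i, (ω j : ℤ) * (rv j : ℤ) := by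
      show (∑ j, (ω j : ℤ) * ((Function.update rv i v j : ℕ) : ℤ)) = _
      rw [← Finset.add_sum_erase _ _ (Finset.mem_univ i), Function.update_self]
      congr 1
      exact Finset.sum_congr rfl fun j hj => by
        rw [Function.update_of_ne (Finset.ne_of_mem_erase hj)]
    have h2 : W rv = (ω i : ℤ) * (rv i : ℤ)
        + ∑ j ∈ Finset.univ.erase i, (ω j : ℤ) * (rv j : ℤ) :=
      (Finset.add_sum_erase _ _ (Finset.mem_univ i)).symm
    rw [h1, h2]
    ring
  -- Step 1: S as a finite sum
  have step1 : ∀ (k : ℕ) (q : ℤ), 0 ≤ q → q ≤ r →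
      S k q = ∑ rv ∈ sbox.filter (fun rv => W rv = q), Fterm m C lam p k rv := by
    intro k q hq hqr
    rw [hS k q hq, tsum_eq_sum (s := sbox) ?_]
    · rw [Finset.sum_filter]
      exact Finset.sum_congr rfl fun rv _ => rfl
    · intro rv hrv
      rw [if_neg]
      intro hWq
      rw [hsbox, Fintype.mem_piFinset] at hrv
      push_neg at hrv
      obtain ⟨i, hi⟩ := hrv
      rw [Finset.mem_range] at hi
      push_neg at hi
      have h1 := hWlb rv i
      have h2 : W rv = q := hWq
      omega
  -- Step 2: shifted sums
  have step2 : ∀ i : Fin m, S n (r - (ω i : ℤ))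
      = ∑ rv ∈ sbox.filter (fun rv => W rv = r ∧ 1 ≤ rv i),
          Fterm m C lam p n (Function.update rv i (rv i - 1)) := by
    intro i
    rcases lt_or_ge (r - (ω i : ℤ)) 0 with hneg | hpos
    · rw [hSneg _ _ hneg, Finset.filter_false_of_mem, Finset.sum_empty]
      rintro rv _ ⟨hWr, hge⟩
      have h1 : (ω i : ℤ) ≤ (ω i : ℤ) * (rv i : ℤ) := by
        have : (1 : ℤ) ≤ (rv i : ℤ) := by exact_mod_cast hge
        nlinarith [Int.ofNat_nonneg (ω i)]
      have h2 := hWterm rv i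
      rw [hWr] at h2
      omega
    · rw [step1 n (r - (ω i : ℤ)) hpos (sub_le_self r (by positivity))]
      refine Finset.sum_bij' (i := fun rv _ => Function.update rv i (rv i + 1))
        (j := fun rv _ => Function.update rv i (rv i - 1)) ?_ ?_ ?_ ?_ ?_
      · -- forward membership
        intro rv hrv
        simp only [Finset.mem_filter, hsbox, Fintype.mem_piFinset, Finset.mem_range] at hrv ⊢
        obtain ⟨hbox, hWq⟩ := hrv
        have hWnew : W (Function.update rv i (rv i + 1)) = r := by
          rw [hWupd, hWq]
          push_cast
          ring
        refine ⟨?_, hWnew, by simp [Function.update_self]⟩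
        intro j
        rcases eq_or_ne j i with rfl | hne
        · rw [Function.update_self]
          have h1 := hWlb (Function.update rv j (rv j + 1)) j
          rw [hWnew, Function.update_self] at h1
          omega
        · rw [Function.update_of_ne hne]
          exact hbox j
      · -- backward membership
        intro rv hrv
        simp only [Finset.mem_filter, hsbox, Fintype.mem_piFinset, Finset.mem_range] at hrv ⊢
        obtain ⟨hbox, hWq, hge⟩ := hrv
        constructor
        · intro j
          rcases eq_or_ne j i with rfl | hne
          · rw [Function.update_self]
            have := hbox j
            omega
          · rw [Function.update_of_ne hne]
            exact hbox j
        · rw [hWupd, hWq]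
          have hc : ((rv i - 1 : ℕ) : ℤ) = (rv i : ℤ) - 1 := by
            have : (1 : ℤ) ≤ (rv i : ℤ) := by exact_mod_cast hge
            push_cast [hge]
            ring
          rw [hc]
          ring
      · -- left inverse
        intro rv _
        funext j
        rcases eq_or_ne j i with rfl | hne
        · simp [Function.update_self]
        · simp [Function.update_of_ne hne]
      · -- right inverse
        intro rv hrv
        rw [Finset.mem_filter] at hrv
        obtain ⟨_, _, hge⟩ := hrv
        funext j
        rcases eq_or_ne j i with rfl | hne
        · simp [Function.update_self]
          omega
        · simp [Function.update_of_ne hne]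
      · -- values
        intro rv _
        congr 1
        funext j
        rcases eq_or_ne j i with rfl | hne
        · simp [Function.update_self]
        · simp [Function.update_of_ne hne]
  -- Step 3: pointwise recursion for Fterm
  have step3 : ∀ rv : Fin m → ℕ,
      Fterm m C lam p (n + 1) rv
        = A * Fterm m C lam p n rv
          + ∑ i, (if 1 ≤ rv i then
              (p * lam i) * Fterm m C lam p n (Function.update rv i (rv i - 1)) else 0) := by
    intro rv
    have hrvle : ∀ i, rv i ≤ ∑ j, rv j := fun i =>
      Finset.single_le_sum (f := fun j => rv j) (fun j _ => Nat.zero_le _) (Finset.mem_univ i)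
    rw [show Fterm m C lam p (n + 1) rv
        = C (n + 1) rv * A ^ (n + 1 - ∑ j, rv j) * ∏ j, (p * lam j) ^ (rv j) from rfl]
    rw [Crec m C hC hC0 n rv, add_mul, add_mul, Finset.sum_mul, Finset.sum_mul]
    congr 1
    · -- remainder term
      rcases le_or_gt (∑ j, rv j) n with h1 | h1
      · have h2 : n + 1 - ∑ j, rv j = (n - ∑ j, rv j) + 1 := by omega
        rw [h2, pow_succ]
        show C n rv * (A ^ (n - ∑ j, rv j) * A) * ∏ j, (p * lam j) ^ (rv j)
          = A * (C n rv * A ^ (n - ∑ j, rv j) * ∏ j, (p * lam j) ^ (rv j))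
        ring
      · show C n rv * A ^ (n + 1 - ∑ j, rv j) * ∏ j, (p * lam j) ^ (rv j)
          = A * (C n rv * A ^ (n - ∑ j, rv j) * ∏ j, (p * lam j) ^ (rv j))
        rw [hC0 n rv h1]
        ring
    · refine Finset.sum_congr rfl fun i _ => ?_
      split_ifs with h
      · have hs := sum_update_sub_one m rv i h
        have hge1 : 1 ≤ ∑ j, rv j := le_trans h (hrvle i)
        show C n (Function.update rv i (rv i - 1)) * A ^ (n + 1 - ∑ j, rv j)
            * ∏ j, (p * lam j) ^ (rv j)
          = (p * lam i) * (C n (Function.update rv i (rv i - 1))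
            * A ^ (n - ∑ j, Function.update rv i (rv i - 1) j)
            * ∏ j, (p * lam j) ^ (Function.update rv i (rv i - 1) j))
        rw [hs, show n - ((∑ j, rv j) - 1) = n + 1 - ∑ j, rv j from by omega]
        rw [← prod_pow_update_sub_one m (fun j => p * lam j) rv i h]
        ring
      · show (0 : ℝ) * A ^ (n + 1 - ∑ j, rv j) * ∏ j, (p * lam j) ^ (rv j) = 0
        ring
  -- Assemble
  rw [step1 (n + 1) r hr le_rfl]
  rw [Finset.sum_congr rfl fun rv _ => step3 rv]
  rw [Finset.sum_add_distrib]
  congr 1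
  · rw [← Finset.mul_sum, step1 n r hr le_rfl]
  · rw [Finset.sum_comm]
    rw [Finset.mul_sum]
    refine Finset.sum_congr rfl fun i _ => ?_
    have h1 : ∑ rv ∈ sbox.filter (fun rv => W rv = r),
        (if 1 ≤ rv i then (p * lam i) * Fterm m C lam p n (Function.update rv i (rv i - 1)) else 0)
        = ∑ rv ∈ (sbox.filter (fun rv => W rv = r)).filter (fun rv => 1 ≤ rv i),
            (p * lam i) * Fterm m C lam p n (Function.update rv i (rv i - 1)) := by
      simp only [Finset.sum_filter]
    rw [h1, Finset.filter_filter, ← Finset.mul_sum, ← step2 i]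
    ring
end

section
/- Let K ≥ 1, let λ_1, …, λ_K ≥ 0 be reals, ω_1, …, ω_K natural numbers, and p ≥ 0 a real. Let s : ℕ → ℤ → ℝ satisfy: s(n, r) ≥ 0 for all n, r; s(n, r) = 0 for all r < 0; for every n the family (s(n, r))_{r ∈ ℕ} is summable with Σ_{r=0}^{∞} s(n, r) = 1 and the family (r·s(n, r))_{r ∈ ℕ} is summable; and for all n and r, s(n+1, r) = s(n, r) − p·Σ_{j=1}^{K} λ_j·s(n, r) + p·Σ_{j=1}^{K} λ_j·s(n, r − ω_j). Then for every n, Σ_{r=0}^{∞} r·s(n+1, r) = Σ_{r=0}^{∞} r·s(n, r) + p·Σ_{j=1}^{K} λ_j·ω_j. -/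
/-- The core computation of Lemma 1 (equations (75)–(76)): one discrete time step
of length `p` increases the expected accumulated cost by exactly `p · Σ_j λ_j · ω_j`. -/
theorem expected_cost_one_step_increase
    (K : ℕ) (hK : 1 ≤ K)
    (lam : Fin K → ℝ) (hlam : ∀ j, 0 ≤ lam j)
    (ω : Fin K → ℕ)
    (p : ℝ) (hp : 0 ≤ p)
    (s : ℕ → ℤ → ℝ)
    (hpos : ∀ (n : ℕ) (r : ℤ), 0 ≤ s n r)
    (hneg : ∀ (n : ℕ) (r : ℤ), r < 0 → s n r = 0)
    (hsum : ∀ n : ℕ, Summable (fun r : ℕ => s n r))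
    (hsum1 : ∀ n : ℕ, ∑' r : ℕ, s n r = 1)
    (hrsum : ∀ n : ℕ, Summable (fun r : ℕ => (r : ℝ) * s n r))
    (hrec : ∀ (n : ℕ) (r : ℤ),
      s (n + 1) r = s n r - p * (∑ j, lam j) * s n r
        + p * ∑ j, lam j * s n (r - (ω j : ℤ))) :
    ∀ n : ℕ, ∑' r : ℕ, (r : ℝ) * s (n + 1) r
      = (∑' r : ℕ, (r : ℝ) * s n r) + p * ∑ j, lam j * (ω j : ℝ) := by
  intro n
  have hs := hsum n
  have hrs := hrsum n
  have hshift : ∀ j : Fin K,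
      (fun r : ℕ => ((r + ω j : ℕ) : ℝ) * s n (((r + ω j : ℕ) : ℤ) - (ω j : ℤ)))
        = fun r : ℕ => (r : ℝ) * s n r + (ω j : ℝ) * s n r := by
    intro j
    funext r
    have h1 : (((r + ω j : ℕ) : ℤ) - (ω j : ℤ)) = (r : ℤ) := by push_cast; ring
    rw [h1]
    push_cast
    ring
  have hfj : ∀ j : Fin K, Summable (fun r : ℕ => (r : ℝ) * s n ((r : ℤ) - (ω j : ℤ))) := by
    intro j
    rw [← summable_nat_add_iff (ω j)]
    refine Summable.congr (hrs.add (hs.mul_left ((ω j : ℝ)))) fun m => ?_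
    exact (congrFun (hshift j) m).symm
  have htj : ∀ j : Fin K, ∑' r : ℕ, (r : ℝ) * s n ((r : ℤ) - (ω j : ℤ))
      = (∑' r : ℕ, (r : ℝ) * s n r) + (ω j : ℝ) := by
    intro j
    have hadd := Summable.sum_add_tsum_nat_add (f := fun r : ℕ => (r : ℝ) * s n ((r : ℤ) - (ω j : ℤ)))
      (ω j) (hfj j)
    have hzero : ∑ i ∈ Finset.range (ω j), (i : ℝ) * s n ((i : ℤ) - (ω j : ℤ)) = 0 := by
      apply Finset.sum_eq_zero
      intro i hi
      rw [Finset.mem_range] at hi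
      have hlt : ((i : ℤ) - (ω j : ℤ)) < 0 := by
        have : (i : ℤ) < (ω j : ℤ) := by exact_mod_cast hi
        omega
      rw [hneg n _ hlt]
      simp
    have htail : ∑' r : ℕ, ((r + ω j : ℕ) : ℝ) * s n (((r + ω j : ℕ) : ℤ) - (ω j : ℤ))
        = (∑' r : ℕ, (r : ℝ) * s n r) + (ω j : ℝ) := by
      rw [hshift j, Summable.tsum_add hrs (hs.mul_left ((ω j : ℝ))), tsum_mul_left, hsum1 n, mul_one]
    rw [hzero, zero_add] at hadd
    rw [← hadd]
    exact htail
  -- rewrite the left-hand side using the recursion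
  have hfun : (fun r : ℕ => (r : ℝ) * s (n + 1) r)
      = fun r : ℕ => ((r : ℝ) * s n r - (p * (∑ j, lam j)) * ((r : ℝ) * s n r))
        + ∑ j, (p * lam j) * ((r : ℝ) * s n ((r : ℤ) - (ω j : ℤ))) := by
    funext r
    rw [hrec n r, mul_add, mul_sub]
    congr 1
    · ring
    · simp only [Finset.mul_sum]
      exact Finset.sum_congr rfl (fun j _ => by ring)
  rw [hfun]
  have hsumm1 : Summable (fun r : ℕ => (r : ℝ) * s n r
      - (p * (∑ j, lam j)) * ((r : ℝ) * s n r)) :=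
    hrs.sub (hrs.mul_left _)
  have hsumm2 : Summable (fun r : ℕ =>
      ∑ j, (p * lam j) * ((r : ℝ) * s n ((r : ℤ) - (ω j : ℤ)))) := by
    apply summable_sum
    intro j _
    exact (hfj j).mul_left _
  rw [Summable.tsum_add hsumm1 hsumm2, Summable.tsum_sub hrs (hrs.mul_left _), tsum_mul_left]
  rw [Summable.tsum_finsetSum (fun j _ => (hfj j).mul_left _)]
  have : ∀ j : Fin K, ∑' r : ℕ, (p * lam j) * ((r : ℝ) * s n ((r : ℤ) - (ω j : ℤ)))
      = (p * lam j) * ((∑' r : ℕ, (r : ℝ) * s n r) + (ω j : ℝ)) := by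
    intro j
    rw [tsum_mul_left, htj j]
  rw [Finset.sum_congr rfl (fun j _ => this j)]
  set M := ∑' r : ℕ, (r : ℝ) * s n r
  have hexp : ∑ j, (p * lam j) * (M + (ω j : ℝ))
      = p * (∑ j, lam j) * M + p * ∑ j, lam j * (ω j : ℝ) := by
    rw [Finset.mul_sum, Finset.sum_mul, Finset.mul_sum, ← Finset.sum_add_distrib]
    apply Finset.sum_congr rfl
    intro j _
    ring
  rw [hexp]
  ring
end

section
/- Let ρ ≠ 0 and a be real numbers with a − ρ not an integer, and let γ_1 be a real number. Define α_1 = γ_1·ρ·(ρ + 2 − a), and recursively for i ≥ 1: γ_{i+1} = α_i/i and α_{i+1} = (ρ/i)·α_i·(2 + ρ − a + i). For J ≥ 1 define f_J : ℤ → ℝ by f_J(q) = Σ_{j=1}^{J} γ_j·Γ(q + a − ρ − j), where Γ is the real Gamma function. Then for every J ≥ 1 and every integer q: f_J(q+2) − (q + a)·f_J(q+1) + ρ·(q+1)·f_J(q) = α_J·Γ(q + a − ρ − J). -/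
lemma gamma_one' (x : ℝ) (hx : x ≠ 0) : Real.Gamma (x + 1) = x * Real.Gamma x :=
  Real.Gamma_add_one hx

lemma gamma_two' (x : ℝ) (hx : x ≠ 0) (hx1 : x + 1 ≠ 0) :
    Real.Gamma (x + 2) = (x + 1) * (x * Real.Gamma x) := by
  have h : x + 2 = (x + 1) + 1 := by ring
  rw [h, Real.Gamma_add_one hx1, Real.Gamma_add_one hx]

/-- The inductive core of Lemma 4: the partial sums `f_J` of Gamma-function terms
satisfy the second-order recurrence with explicit remainder `α_J · Γ(q + a − ρ − J)`. -/
theorem lemma4_inductive_core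
    (ρ a : ℝ) (hρ : ρ ≠ 0) (hint : ∀ z : ℤ, a - ρ ≠ (z : ℝ))
    (γ α : ℕ → ℝ) (γ₁ : ℝ) (hγ1 : γ 1 = γ₁)
    (hα1 : α 1 = γ₁ * ρ * (ρ + 2 - a))
    (hγ : ∀ i : ℕ, 1 ≤ i → γ (i + 1) = α i / (i : ℝ))
    (hα : ∀ i : ℕ, 1 ≤ i → α (i + 1) = (ρ / (i : ℝ)) * α i * (2 + ρ - a + (i : ℝ))) :
    ∀ J : ℕ, 1 ≤ J → ∀ q : ℤ,
      (∑ j ∈ Finset.Icc 1 J, γ j * Real.Gamma (((q : ℝ) + 2) + a - ρ - (j : ℝ)))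
        - ((q : ℝ) + a) *
          (∑ j ∈ Finset.Icc 1 J, γ j * Real.Gamma (((q : ℝ) + 1) + a - ρ - (j : ℝ)))
        + ρ * ((q : ℝ) + 1) *
          (∑ j ∈ Finset.Icc 1 J, γ j * Real.Gamma ((q : ℝ) + a - ρ - (j : ℝ)))
      = α J * Real.Gamma ((q : ℝ) + a - ρ - (J : ℝ)) := by
  have hne : ∀ (q : ℤ) (n : ℤ), (q : ℝ) + a - ρ - (n : ℝ) ≠ 0 := by
    intro q n h
    apply hint (n - q)
    push_cast
    linarith
  intro J hJ
  induction J, hJ using Nat.le_induction with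
  | base =>
    intro q
    have hx : (q : ℝ) + a - ρ - 1 ≠ 0 := by
      have := hne q 1; push_cast at this; exact this
    have hx1 : ((q : ℝ) + a - ρ - 1) + 1 ≠ 0 := by
      have := hne q 0; push_cast at this; intro h; apply this; linarith
    have e2 : ((q : ℝ) + 2) + a - ρ - ((1:ℕ):ℝ) = ((q : ℝ) + a - ρ - 1) + 2 := by
      push_cast; ring
    have e1 : ((q : ℝ) + 1) + a - ρ - ((1:ℕ):ℝ) = ((q : ℝ) + a - ρ - 1) + 1 := by
      push_cast; ring
    have e0 : (q : ℝ) + a - ρ - ((1:ℕ):ℝ) = (q : ℝ) + a - ρ - 1 := by push_cast; ring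
    simp only [Finset.Icc_self, Finset.sum_singleton, e2, e1, e0,
      gamma_two' _ hx hx1, gamma_one' _ hx, hγ1, hα1]
    ring
  | succ J hJ ih =>
    intro q
    have hJne : (J : ℝ) ≠ 0 := Nat.cast_ne_zero.mpr (by omega)
    have hga : γ (J + 1) * (J : ℝ) = α J := by
      rw [hγ J hJ]; field_simp
    have haa : α (J + 1) * (J : ℝ) = ρ * α J * (2 + ρ - a + (J : ℝ)) := by
      rw [hα J hJ]; field_simp; try ring
    have hx : (q : ℝ) + a - ρ - ((J:ℝ) + 1) ≠ 0 := by
      have := hne q (J + 1); push_cast at this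
      intro h; apply this; linarith
    have hx1 : ((q : ℝ) + a - ρ - ((J:ℝ) + 1)) + 1 ≠ 0 := by
      have := hne q J; push_cast at this
      intro h; apply this; linarith
    rw [Finset.sum_Icc_succ_top (by omega : 1 ≤ J + 1),
        Finset.sum_Icc_succ_top (by omega : 1 ≤ J + 1),
        Finset.sum_Icc_succ_top (by omega : 1 ≤ J + 1)]
    have e2 : ((q : ℝ) + 2) + a - ρ - ((J+1:ℕ):ℝ) = ((q : ℝ) + a - ρ - ((J:ℝ)+1)) + 2 := by
      push_cast; ring
    have e1 : ((q : ℝ) + 1) + a - ρ - ((J+1:ℕ):ℝ) = ((q : ℝ) + a - ρ - ((J:ℝ)+1)) + 1 := by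
      push_cast; ring
    have e0 : (q : ℝ) + a - ρ - ((J+1:ℕ):ℝ) = (q : ℝ) + a - ρ - ((J:ℝ)+1) := by
      push_cast; ring
    have eJ : (q : ℝ) + a - ρ - ((J:ℕ):ℝ) = ((q : ℝ) + a - ρ - ((J:ℝ)+1)) + 1 := by
      push_cast; ring
    rw [e2, e1, e0, gamma_two' _ hx hx1, gamma_one' _ hx]
    have ihq := ih q
    rw [eJ, gamma_one' _ hx] at ihq
    apply mul_left_cancel₀ hJne
    set G := Real.Gamma ((q : ℝ) + a - ρ - ((J:ℝ) + 1)) with hG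
    linear_combination (J : ℝ) * ihq
      + (G * (ρ * ((q:ℝ)+1) - ((q:ℝ) + a - ρ - ((J:ℝ)+1)) * (ρ + (J:ℝ)))) * hga
      - G * haa
end
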